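/- Every valid pair (i, c) with i < 2^{ℓ/2} − 1 and c < 2^ℓ − 1 (meaning there exists a < 2^ℓ with a ≡ i (mod 2^{ℓ/2} − 1) and c ≤₂ a) is supported by at least one valid triple of length ℓ/2: writing c = c₀·2^{ℓ/2} + c₁ with c₀, c₁ ∈ [2^{ℓ/2}], there exists y ∈ [2^{ℓ/2}] and a witness (a₀, a₁) for the validity of (y, c₀, c₁) with a₀ + a₁ ≡ i (mod 2^{ℓ/2} − 1). -/

import Mathlib

/-- `Shadow2 n m` : every bit set in `n` is also set in `m` (i.e. `n ≤₂ m`). -/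
def Shadow2 (n m : ℕ) : Prop := ∀ i, n.testBit i = true → m.testBit i = true

/-- Every valid pair `(i, c)` (with `i < 2^(ℓ/2) - 1`, `c < 2^ℓ - 1` and a
witness `a < 2^ℓ`, `a ≡ i (mod 2^(ℓ/2) - 1)`, `c ≤₂ a`) is supported by a valid
triple of length `r = ℓ/2`: writing `c₀ = c / 2^r`, `c₁ = c % 2^r`, there is a
`y ∈ [2^r]` and a witness `(a₀, a₁)` for `(y, c₀, c₁)` with
`a₀ + a₁ ≡ i (mod 2^r - 1)`. -/
theorem valid_pair_supported (r : ℕ) (i c a : ℕ)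
    (hi : i < 2 ^ r - 1) (hc : c < 2 ^ (2 * r) - 1) (ha : a < 2 ^ (2 * r))
    (hmod : a % (2 ^ r - 1) = i) (hsh : Shadow2 c a) :
    ∃ y < 2 ^ r, ∃ a₀ < 2 ^ r, ∃ a₁ < 2 ^ r,
      Shadow2 (c / 2 ^ r) a₀ ∧ Shadow2 (c % 2 ^ r) a₁ ∧
      (a₀ + a₁) % 2 ^ r = y ∧ (a₀ + a₁) % (2 ^ r - 1) = i := by
  set a₀ := a / 2 ^ r with ha0
  set a₁ := a % 2 ^ r with ha1
  have h2r : (0:ℕ) < 2 ^ r := Nat.pow_pos (by norm_num)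
  have ha0lt : a₀ < 2 ^ r := by
    rw [ha0, Nat.div_lt_iff_lt_mul h2r, ← pow_add]
    convert ha using 2; ring
  have ha1lt : a₁ < 2 ^ r := Nat.mod_lt _ h2r
  refine ⟨(a₀ + a₁) % 2 ^ r, Nat.mod_lt _ h2r, a₀, ha0lt, a₁, ha1lt, ?_, ?_, rfl, ?_⟩
  · intro j hj
    rw [ha0, ← Nat.shiftRight_eq_div_pow, Nat.testBit_shiftRight]
    rw [← Nat.shiftRight_eq_div_pow, Nat.testBit_shiftRight] at hj
    exact hsh _ hj
  · intro j hj
    rw [Nat.testBit_mod_two_pow] at hj ⊢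
    simp only [Bool.and_eq_true] at hj ⊢
    exact ⟨hj.1, hsh _ hj.2⟩
  · have heq : a = 2 ^ r * a₀ + a₁ := (Nat.div_add_mod a (2 ^ r)).symm
    have hmeq : (2 ^ r : ℕ) ≡ 1 [MOD 2 ^ r - 1] := by
      have : 2 ^ r - 1 + 1 = 2 ^ r := Nat.succ_pred_eq_of_pos h2r
      calc (2 ^ r : ℕ) = 2 ^ r - 1 + 1 := this.symm
        _ ≡ 0 + 1 [MOD 2 ^ r - 1] := Nat.ModEq.add_right 1 (Nat.modEq_zero_iff_dvd.2 dvd_rfl)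
        _ = 1 := by ring
    have : (a₀ + a₁) ≡ a [MOD 2 ^ r - 1] := by
      rw [heq]
      calc (a₀ + a₁ : ℕ) = 1 * a₀ + a₁ := by ring
        _ ≡ 2 ^ r * a₀ + a₁ [MOD 2 ^ r - 1] := ((hmeq.symm.mul_right a₀).add_right a₁)
    rw [Nat.ModEq] at this
    rw [this, hmod]
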